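/- arXiv:quant-ph/0610175 — 7 statements merged into one kernel-verified Lean document; each statement's English description precedes it below -/
import Mathlib

section
/- Let X be a set of cardinality 2 (Alice's inputs), Y a set (Bob's inputs), and let 𝒜 and ℬ be finite nonempty sets (Alice's and Bob's outputs), and let W ⊆ X × Y × 𝒜 × ℬ be a relation. If there exists a quantum winning strategy for the game (X, Y, 𝒜, ℬ, W) in the commuting-operator model, then there also exists a classical winning strategy, i.e. functions a : X → 𝒜 and b : Y → ℬ such that (x, y, a x, b y) ∈ W for all x ∈ X and y ∈ Y. In particular, no bipartite pseudo-telepathy game exists in which one of the partners receives only two questions. -/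
open scoped InnerProductSpace

/-- For a self-adjoint idempotent `P` and an idempotent `Q` commuting with `P`,
`⟪ψ, P (Q ψ)⟫ = ⟪P (Q ψ), P (Q ψ)⟫`. -/
lemma pt_aux_self {H : Type*} [NormedAddCommGroup H] [InnerProductSpace ℂ H]
    (ψ : H) (P Q : H →ₗ[ℂ] H)
    (hPi : P ∘ₗ P = P) (hPsa : ∀ u v : H, ⟪P u, v⟫_ℂ = ⟪u, P v⟫_ℂ)
    (hQi : Q ∘ₗ Q = Q) (hQsa : ∀ u v : H, ⟪Q u, v⟫_ℂ = ⟪u, Q v⟫_ℂ)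
    (hc : P ∘ₗ Q = Q ∘ₗ P) :
    ⟪ψ, P (Q ψ)⟫_ℂ = ⟪P (Q ψ), P (Q ψ)⟫_ℂ := by
  have hc' : ∀ v : H, P (Q v) = Q (P v) := fun v => LinearMap.congr_fun hc v
  have hQ' : ∀ v : H, Q (Q v) = Q v := fun v => LinearMap.congr_fun hQi v
  have hP' : ∀ v : H, P (P v) = P v := fun v => LinearMap.congr_fun hPi v
  calc ⟪ψ, P (Q ψ)⟫_ℂ = ⟪ψ, P (P (Q (Q ψ)))⟫_ℂ := by rw [hQ', hP']
    _ = ⟪P ψ, P (Q (Q ψ))⟫_ℂ := (hPsa _ _).symm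
    _ = ⟪P ψ, Q (P (Q ψ))⟫_ℂ := by rw [hc']
    _ = ⟪Q (P ψ), P (Q ψ)⟫_ℂ := (hQsa _ _).symm
    _ = ⟪P (Q ψ), P (Q ψ)⟫_ℂ := by rw [hc']

/-- If `Q` is an idempotent commuting with `P₁` and `P₂` (both self-adjoint), and
`⟪ψ, P₁ (P₂ (Q ψ))⟫ ≠ 0`, then both `P₁ (Q ψ) ≠ 0` and `P₂ (Q ψ) ≠ 0`. -/
lemma pt_aux_two {H : Type*} [NormedAddCommGroup H] [InnerProductSpace ℂ H]
    (ψ : H) (P₁ P₂ Q : H →ₗ[ℂ] H)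
    (hP1sa : ∀ u v : H, ⟪P₁ u, v⟫_ℂ = ⟪u, P₁ v⟫_ℂ)
    (hQsa : ∀ u v : H, ⟪Q u, v⟫_ℂ = ⟪u, Q v⟫_ℂ)
    (hQi : Q ∘ₗ Q = Q)
    (hc1 : P₁ ∘ₗ Q = Q ∘ₗ P₁) (hc2 : P₂ ∘ₗ Q = Q ∘ₗ P₂)
    (h : ⟪ψ, P₁ (P₂ (Q ψ))⟫_ℂ ≠ 0) :
    P₁ (Q ψ) ≠ 0 ∧ P₂ (Q ψ) ≠ 0 := by
  have hc1' : ∀ v : H, P₁ (Q v) = Q (P₁ v) := fun v => LinearMap.congr_fun hc1 v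
  have hc2' : ∀ v : H, P₂ (Q v) = Q (P₂ v) := fun v => LinearMap.congr_fun hc2 v
  have hQ' : ∀ v : H, Q (Q v) = Q v := fun v => LinearMap.congr_fun hQi v
  have key : ⟪ψ, P₁ (P₂ (Q ψ))⟫_ℂ = ⟪P₁ (Q ψ), P₂ (Q ψ)⟫_ℂ := by
    calc ⟪ψ, P₁ (P₂ (Q ψ))⟫_ℂ = ⟪P₁ ψ, P₂ (Q ψ)⟫_ℂ := (hP1sa _ _).symm
      _ = ⟪P₁ ψ, P₂ (Q (Q ψ))⟫_ℂ := by rw [hQ']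
      _ = ⟪P₁ ψ, Q (P₂ (Q ψ))⟫_ℂ := by rw [hc2']
      _ = ⟪Q (P₁ ψ), P₂ (Q ψ)⟫_ℂ := (hQsa _ _).symm
      _ = ⟪P₁ (Q ψ), P₂ (Q ψ)⟫_ℂ := by rw [hc1']
  rw [key] at h
  refine ⟨fun h0 => h ?_, fun h0 => h ?_⟩
  · rw [h0, inner_zero_left]
  · rw [h0, inner_zero_right]

/-- **No bipartite pseudo-telepathy game with only two questions for Alice.**
If a bipartite game whose Alice-input set `X` has cardinality 2 admits a winning
quantum strategy in the commuting-operator model, then it also admits a classical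
winning strategy. -/
theorem no_pseudotelepathy_with_two_inputs
    {X Y 𝒜 ℬ : Type*} [Fintype X] [Fintype 𝒜] [Nonempty 𝒜] [Fintype ℬ] [Nonempty ℬ]
    (hX : Fintype.card X = 2)
    (W : Set (X × Y × 𝒜 × ℬ))
    {H : Type*} [NormedAddCommGroup H] [InnerProductSpace ℂ H] [CompleteSpace H]
    (ψ : H) (hψ : ψ ≠ 0)
    (P : X → 𝒜 → H →ₗ[ℂ] H) (Q : Y → ℬ → H →ₗ[ℂ] H)
    (hPidem : ∀ x a, P x a ∘ₗ P x a = P x a)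
    (hPsa : ∀ x a (u v : H), ⟪P x a u, v⟫_ℂ = ⟪u, P x a v⟫_ℂ)
    (hPsum : ∀ x, ∑ a, P x a = LinearMap.id)
    (hQidem : ∀ y b, Q y b ∘ₗ Q y b = Q y b)
    (hQsa : ∀ y b (u v : H), ⟪Q y b u, v⟫_ℂ = ⟪u, Q y b v⟫_ℂ)
    (hQsum : ∀ y, ∑ b, Q y b = LinearMap.id)
    (hcomm : ∀ x y a b, P x a ∘ₗ Q y b = Q y b ∘ₗ P x a)
    (hwin : ∀ x y a b, ⟪ψ, P x a (Q y b ψ)⟫_ℂ ≠ 0 → (x, y, a, b) ∈ W) :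
    ∃ (a : X → 𝒜) (b : Y → ℬ), ∀ x y, (x, y, a x, b y) ∈ W := by
  classical
  have hX2 : Nat.card X = 2 := by simpa [Nat.card_eq_fintype_card] using hX
  obtain ⟨x₁, x₂, hx12, huniv⟩ := Nat.card_eq_two_iff.mp hX2
  have hXall : ∀ x : X, x = x₁ ∨ x = x₂ := by
    intro x
    have : x ∈ ({x₁, x₂} : Set X) := huniv ▸ Set.mem_univ x
    simpa using this
  -- choose a₁, a₂ with ⟪ψ, P x₁ a₁ (P x₂ a₂ ψ)⟫ ≠ 0
  have hsum : ∑ a : 𝒜, ∑ c : 𝒜, ⟪ψ, P x₁ a (P x₂ c ψ)⟫_ℂ = ⟪ψ, ψ⟫_ℂ := by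
    have : ∑ a : 𝒜, ∑ c : 𝒜, ⟪ψ, P x₁ a (P x₂ c ψ)⟫_ℂ
        = ⟪ψ, (∑ a : 𝒜, P x₁ a) ((∑ c : 𝒜, P x₂ c) ψ)⟫_ℂ := by
      simp [LinearMap.sum_apply, inner_sum, map_sum]
      exact Finset.sum_comm
    rw [this, hPsum, hPsum]
    simp
  have hne : ∑ a : 𝒜, ∑ c : 𝒜, ⟪ψ, P x₁ a (P x₂ c ψ)⟫_ℂ ≠ 0 := by
    rw [hsum]; exact inner_self_ne_zero.mpr hψ
  obtain ⟨a₁, -, ha₁⟩ := Finset.exists_ne_zero_of_sum_ne_zero hne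
  obtain ⟨a₂, -, ha⟩ := Finset.exists_ne_zero_of_sum_ne_zero ha₁
  -- for each y, choose b with ⟪ψ, P x₁ a₁ (P x₂ a₂ (Q y b ψ))⟫ ≠ 0
  have hb : ∀ y : Y, ∃ b : ℬ, ⟪ψ, P x₁ a₁ (P x₂ a₂ (Q y b ψ))⟫_ℂ ≠ 0 := by
    intro y
    have hsb : ∑ b : ℬ, ⟪ψ, P x₁ a₁ (P x₂ a₂ (Q y b ψ))⟫_ℂ
        = ⟪ψ, P x₁ a₁ (P x₂ a₂ ψ)⟫_ℂ := by
      have : ∑ b : ℬ, ⟪ψ, P x₁ a₁ (P x₂ a₂ (Q y b ψ))⟫_ℂ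
          = ⟪ψ, P x₁ a₁ (P x₂ a₂ ((∑ b : ℬ, Q y b) ψ))⟫_ℂ := by
        simp [LinearMap.sum_apply, inner_sum, map_sum]
      rw [this, hQsum]; rfl
    have : ∑ b : ℬ, ⟪ψ, P x₁ a₁ (P x₂ a₂ (Q y b ψ))⟫_ℂ ≠ 0 := by rw [hsb]; exact ha
    obtain ⟨b, -, hbne⟩ := Finset.exists_ne_zero_of_sum_ne_zero this
    exact ⟨b, hbne⟩
  choose bf hbf using hb
  -- the classical strategy
  refine ⟨fun x => if x = x₁ then a₁ else a₂, bf, ?_⟩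
  intro x y
  -- both answers are compatible with bf y
  have hboth := pt_aux_two ψ (P x₁ a₁) (P x₂ a₂) (Q y (bf y))
    (hPsa x₁ a₁) (hQsa y (bf y)) (hQidem y (bf y))
    (hcomm x₁ y a₁ (bf y)) (hcomm x₂ y a₂ (bf y)) (hbf y)
  have hwx : ∀ (x' : X) (a' : 𝒜), P x' a' (Q y (bf y) ψ) ≠ 0 → (x', y, a', bf y) ∈ W := by
    intro x' a' hne0
    apply hwin
    rw [pt_aux_self ψ (P x' a') (Q y (bf y)) (hPidem x' a') (hPsa x' a')
      (hQidem y (bf y)) (hQsa y (bf y)) (hcomm x' y a' (bf y))]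
    exact inner_self_ne_zero.mpr hne0
  rcases hXall x with rfl | rfl
  · simpa using hwx x a₁ hboth.1
  · have hne' : x ≠ x₁ := fun h => hx12 h.symm
    simpa [hne'] using hwx x a₂ hboth.2
end

section
/- Let H be a complex inner product space and let φ, φ' ∈ H satisfy ⟪φ, φ'⟫ ≠ 0. Let (R_b)_{b ∈ ℬ} be a finite family of orthogonal projections on H with ∑_b R_b = 1. Then there exists b ∈ ℬ such that ⟪φ, R_b φ⟫ ≠ 0 and ⟪φ', R_b φ'⟫ ≠ 0. -/
open scoped InnerProductSpace

/-- **A common non-vanishing projector for two overlapping states.**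
If `⟪φ, φ'⟫ ≠ 0` and `(R b)` is a finite family of orthogonal projections summing
to the identity, then some `R b` has nonzero expectation value in both `φ` and `φ'`. -/
theorem exists_common_projection_of_overlap
    {H : Type*} [NormedAddCommGroup H] [InnerProductSpace ℂ H]
    {ℬ : Type*} [Fintype ℬ]
    (φ φ' : H) (hφφ' : ⟪φ, φ'⟫_ℂ ≠ 0)
    (R : ℬ → H →ₗ[ℂ] H)
    (hRidem : ∀ b, R b ∘ₗ R b = R b)
    (hRsa : ∀ b (u v : H), ⟪R b u, v⟫_ℂ = ⟪u, R b v⟫_ℂ)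
    (hRsum : ∑ b, R b = LinearMap.id) :
    ∃ b : ℬ, ⟪φ, R b φ⟫_ℂ ≠ 0 ∧ ⟪φ', R b φ'⟫_ℂ ≠ 0 := by
  by_contra h
  push_neg at h
  have hRR : ∀ b (u : H), R b (R b u) = R b u := fun b u => by
    have := congrArg (fun f : H →ₗ[ℂ] H => f u) (hRidem b)
    simpa using this
  have hexp : ∀ b (u : H), ⟪u, R b u⟫_ℂ = ⟪R b u, R b u⟫_ℂ := fun b u => by
    rw [hRsa, hRR]
  have hzero : ∀ b (u : H), ⟪u, R b u⟫_ℂ = 0 → R b u = 0 := fun b u hu => by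
    rw [hexp] at hu
    exact inner_self_eq_zero.mp hu
  have key : ∀ b, ⟪φ, R b φ'⟫_ℂ = 0 := by
    intro b
    have hcross : ⟪φ, R b φ'⟫_ℂ = ⟪R b φ, R b φ'⟫_ℂ := by rw [hRsa, hRR]
    rcases Classical.em (⟪φ, R b φ⟫_ℂ = 0) with h1 | h1
    · rw [hcross, hzero b φ h1, inner_zero_left]
    · rw [hcross, hzero b φ' (h b h1), inner_zero_right]
  apply hφφ'
  have : ⟪φ, (∑ b, R b) φ'⟫_ℂ = 0 := by
    rw [LinearMap.sum_apply, inner_sum]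
    simp [key]
  simpa [hRsum] using this
end

section
/- Let (X = Fin 2, Y, 𝒜, ℬ, W) be a bipartite game where Alice has exactly two inputs, and suppose it admits a winning quantum strategy in the commuting-operator model given by H, ψ ≠ 0, projections (P^x_a) and (Q^y_b). Then there exist outputs a₀, a₁ ∈ 𝒜 such that for every y ∈ Y there exists b^(y) ∈ ℬ with ⟪ψ, P^0_{a₀} (Q^y_{b^(y)} ψ)⟫ ≠ 0 and ⟪ψ, P^1_{a₁} (Q^y_{b^(y)} ψ)⟫ ≠ 0; consequently (0, y, a₀, b^(y)) ∈ W and (1, y, a₁, b^(y)) ∈ W for every y ∈ Y. -/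
open scoped InnerProductSpace

/-- For a winning commuting-operator quantum strategy of a game in which Alice has
exactly two inputs, there are outputs `a₀, a₁` for Alice such that for each of Bob's
inputs `y` there is an output `b` which occurs with nonzero amplitude together with
both `a₀` (on input `0`) and `a₁` (on input `1`); consequently both
`(0, y, a₀, b)` and `(1, y, a₁, b)` belong to the winning relation `W`. -/
theorem quantum_strategy_yields_deterministic_strategy
    {Y 𝒜 ℬ : Type*} [Fintype 𝒜] [Nonempty 𝒜] [Fintype ℬ] [Nonempty ℬ]
    (W : Set (Fin 2 × Y × 𝒜 × ℬ))
    {H : Type*} [NormedAddCommGroup H] [InnerProductSpace ℂ H] [CompleteSpace H]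
    (ψ : H) (hψ : ψ ≠ 0)
    (P : Fin 2 → 𝒜 → H →ₗ[ℂ] H) (Q : Y → ℬ → H →ₗ[ℂ] H)
    (hPidem : ∀ x a, P x a ∘ₗ P x a = P x a)
    (hPsa : ∀ x a (u v : H), ⟪P x a u, v⟫_ℂ = ⟪u, P x a v⟫_ℂ)
    (hPsum : ∀ x, ∑ a, P x a = LinearMap.id)
    (hQidem : ∀ y b, Q y b ∘ₗ Q y b = Q y b)
    (hQsa : ∀ y b (u v : H), ⟪Q y b u, v⟫_ℂ = ⟪u, Q y b v⟫_ℂ)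
    (hQsum : ∀ y, ∑ b, Q y b = LinearMap.id)
    (hcomm : ∀ x y a b, P x a ∘ₗ Q y b = Q y b ∘ₗ P x a)
    (hwin : ∀ x y a b, ⟪ψ, P x a (Q y b ψ)⟫_ℂ ≠ 0 → (x, y, a, b) ∈ W) :
    ∃ a₀ a₁ : 𝒜, ∀ y : Y, ∃ b : ℬ,
      ⟪ψ, P 0 a₀ (Q y b ψ)⟫_ℂ ≠ 0 ∧ ⟪ψ, P 1 a₁ (Q y b ψ)⟫_ℂ ≠ 0 ∧
      (0, y, a₀, b) ∈ W ∧ (1, y, a₁, b) ∈ W := by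
  classical
  -- ⟪u, Q v⟫ = ⟪Q u, Q v⟫ for the projections Q
  have hQproj : ∀ y b (u v : H), ⟪u, Q y b v⟫_ℂ = ⟪Q y b u, Q y b v⟫_ℂ := by
    intro y b u v
    have h := LinearMap.congr_fun (hQidem y b) v
    rw [LinearMap.comp_apply] at h
    calc ⟪u, Q y b v⟫_ℂ = ⟪u, Q y b (Q y b v)⟫_ℂ := by rw [h]
      _ = ⟪Q y b u, Q y b v⟫_ℂ := (hQsa y b u (Q y b v)).symm
  have hPproj : ∀ x a (u v : H), ⟪u, P x a v⟫_ℂ = ⟪P x a u, P x a v⟫_ℂ := by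
    intro x a u v
    have h := LinearMap.congr_fun (hPidem x a) v
    rw [LinearMap.comp_apply] at h
    calc ⟪u, P x a v⟫_ℂ = ⟪u, P x a (P x a v)⟫_ℂ := by rw [h]
      _ = ⟪P x a u, P x a v⟫_ℂ := (hPsa x a u (P x a v)).symm
  -- key identity: the amplitude is a squared norm
  have hkey : ∀ x y a b,
      ⟪ψ, P x a (Q y b ψ)⟫_ℂ = ⟪Q y b (P x a ψ), Q y b (P x a ψ)⟫_ℂ := by
    intro x y a b
    have hc := LinearMap.congr_fun (hcomm x y a b) ψ
    rw [LinearMap.comp_apply, LinearMap.comp_apply] at hc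
    calc ⟪ψ, P x a (Q y b ψ)⟫_ℂ
        = ⟪P x a ψ, Q y b ψ⟫_ℂ := (hPsa x a ψ _).symm
      _ = ⟪Q y b (P x a ψ), Q y b ψ⟫_ℂ := hQproj y b (P x a ψ) ψ
      _ = ⟪P x a (Q y b ψ), Q y b ψ⟫_ℂ := by rw [hc]
      _ = ⟪Q y b ψ, P x a (Q y b ψ)⟫_ℂ := hPsa x a (Q y b ψ) (Q y b ψ)
      _ = ⟪P x a (Q y b ψ), P x a (Q y b ψ)⟫_ℂ := hPproj x a (Q y b ψ) (Q y b ψ)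
      _ = ⟪Q y b (P x a ψ), Q y b (P x a ψ)⟫_ℂ := by rw [hc]
  -- applying the sum hypotheses to ψ
  have hPsumψ : ∀ x, ∑ a, P x a ψ = ψ := by
    intro x
    have := LinearMap.congr_fun (hPsum x) ψ
    rwa [LinearMap.sum_apply, LinearMap.id_apply] at this
  have hQsumv : ∀ y (v : H), ∑ b, Q y b v = v := by
    intro y v
    have := LinearMap.congr_fun (hQsum y) v
    rwa [LinearMap.sum_apply, LinearMap.id_apply] at this
  -- choose a₀, a₁ with ⟪P 1 a₁ ψ, P 0 a₀ ψ⟫ ≠ 0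
  have hsum : ∑ a₁ : 𝒜, ∑ a₀ : 𝒜, ⟪P 1 a₁ ψ, P 0 a₀ ψ⟫_ℂ = ⟪ψ, ψ⟫_ℂ := by
    have : ∀ a₁ : 𝒜, ∑ a₀ : 𝒜, ⟪P 1 a₁ ψ, P 0 a₀ ψ⟫_ℂ = ⟪P 1 a₁ ψ, ψ⟫_ℂ := by
      intro a₁
      rw [← inner_sum, hPsumψ 0]
    rw [Finset.sum_congr rfl (fun a₁ _ => this a₁), ← sum_inner, hPsumψ 1]
  have hψψ : ⟪ψ, ψ⟫_ℂ ≠ 0 := fun h => hψ (inner_self_eq_zero.mp h)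
  obtain ⟨a₁, -, h1⟩ := Finset.exists_ne_zero_of_sum_ne_zero (hsum ▸ hψψ)
  obtain ⟨a₀, -, h01⟩ := Finset.exists_ne_zero_of_sum_ne_zero h1
  refine ⟨a₀, a₁, fun y => ?_⟩
  -- choose b with ⟪P 1 a₁ ψ, Q y b (P 0 a₀ ψ)⟫ ≠ 0
  have hsumb : ∑ b : ℬ, ⟪P 1 a₁ ψ, Q y b (P 0 a₀ ψ)⟫_ℂ = ⟪P 1 a₁ ψ, P 0 a₀ ψ⟫_ℂ := by
    rw [← inner_sum, hQsumv y (P 0 a₀ ψ)]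
  obtain ⟨b, -, hb⟩ := Finset.exists_ne_zero_of_sum_ne_zero (hsumb ▸ h01)
  rw [hQproj] at hb
  have hQ0 : Q y b (P 0 a₀ ψ) ≠ 0 := fun h => hb (by rw [h, inner_zero_right])
  have hQ1 : Q y b (P 1 a₁ ψ) ≠ 0 := fun h => hb (by rw [h, inner_zero_left])
  have h0 : ⟪ψ, P 0 a₀ (Q y b ψ)⟫_ℂ ≠ 0 := by
    rw [hkey]; exact fun h => hQ0 (inner_self_eq_zero.mp h)
  have h1' : ⟪ψ, P 1 a₁ (Q y b ψ)⟫_ℂ ≠ 0 := by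
    rw [hkey]; exact fun h => hQ1 (inner_self_eq_zero.mp h)
  exact ⟨b, h0, h1', hwin 0 y a₀ b h0, hwin 1 y a₁ b h1'⟩
end

section
/- There is no function c : Fin 3 → Fin 3 → ZMod 2 such that for every x ∈ Fin 3, c x 0 + c x 1 + c x 2 = 0, and for every y ∈ Fin 3, c 0 y + c 1 y + c 2 y = 1. Hence no shared classical table allows Alice and Bob to win the Magic Square game on all nine inputs. -/
/-- **No classical magic square exists.**
There is no 3×3 table of bits whose rows all sum to `0` and whose columns all
sum to `1` (mod 2); hence no shared classical table lets Alice and Bob win the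
Magic Square game on all nine inputs. -/
theorem no_magic_square_table :
    ¬ ∃ c : Fin 3 → Fin 3 → ZMod 2,
        (∀ x : Fin 3, c x 0 + c x 1 + c x 2 = 0) ∧
        (∀ y : Fin 3, c 0 y + c 1 y + c 2 y = 1) := by
  rintro ⟨c, hr, hc⟩
  have h0 := hr 0; have h1 := hr 1; have h2 := hr 2
  have g0 := hc 0; have g1 := hc 1; have g2 := hc 2
  have : (0 : ZMod 2) = 1 := by
    calc (0 : ZMod 2) = (c 0 0 + c 0 1 + c 0 2) + (c 1 0 + c 1 1 + c 1 2)
        + (c 2 0 + c 2 1 + c 2 2) := by rw [h0, h1, h2]; ring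
      _ = (c 0 0 + c 1 0 + c 2 0) + (c 0 1 + c 1 1 + c 2 1)
        + (c 0 2 + c 1 2 + c 2 2) := by ring
      _ = 1 := by rw [g0, g1, g2]; decide
  exact absurd this (by decide)
end

section
/- For every deterministic Alice strategy A and deterministic Bob strategy B for the Magic Square game, the number of input pairs (x, y) ∈ Fin 3 × Fin 3 on which (A, B) wins, i.e. the cardinality of {(x, y) : A x y = B y x}, is at most 8. -/
/-- **Classical bound for the Magic Square game.**
Any pair of deterministic strategies (Alice's rows summing to `0`, Bob's columns
summing to `1` mod 2) wins on at most 8 of the 9 input pairs. -/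
theorem magic_square_deterministic_bound
    (A B : Fin 3 → Fin 3 → ZMod 2)
    (hA : ∀ x : Fin 3, A x 0 + A x 1 + A x 2 = 0)
    (hB : ∀ y : Fin 3, B y 0 + B y 1 + B y 2 = 1) :
    (Finset.univ.filter (fun p : Fin 3 × Fin 3 => A p.1 p.2 = B p.2 p.1)).card ≤ 8 := by
  by_contra h
  push_neg at h
  have hsub : (Finset.univ.filter (fun p : Fin 3 × Fin 3 => A p.1 p.2 = B p.2 p.1)) = Finset.univ := by
    apply Finset.eq_univ_of_card
    have hle := Finset.card_filter_le (Finset.univ : Finset (Fin 3 × Fin 3))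
      (fun p => A p.1 p.2 = B p.2 p.1)
    simp only [Finset.card_univ, Fintype.card_prod, Fintype.card_fin] at hle ⊢
    omega
  have key : ∀ x y : Fin 3, A x y = B y x := by
    intro x y
    have := Finset.mem_filter.mp (hsub ▸ Finset.mem_univ ((x, y) : Fin 3 × Fin 3))
    exact this.2
  have contra : (0 : ZMod 2) = 1 := by
    calc (0 : ZMod 2)
        = (A 0 0 + A 0 1 + A 0 2) + (A 1 0 + A 1 1 + A 1 2) + (A 2 0 + A 2 1 + A 2 2) := by
          rw [hA 0, hA 1, hA 2]; ring
      _ = (B 0 0 + B 0 1 + B 0 2) + (B 1 0 + B 1 1 + B 1 2) + (B 2 0 + B 2 1 + B 2 2) := by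
          rw [key 0 0, key 0 1, key 0 2, key 1 0, key 1 1, key 1 2, key 2 0, key 2 1, key 2 2]
          ring
      _ = 1 := by rw [hB 0, hB 1, hB 2]; decide
  exact absurd contra (by decide)
end

section
/- Let S be the (finite) set of pairs (A, B) of deterministic Alice and Bob strategies for the Magic Square game, and let w : S → ℝ be nonnegative weights with ∑_{(A,B) ∈ S} w(A,B) = 1 (a local randomized strategy). Then the Bell expression ∑_{x ∈ Fin 3} ∑_{y ∈ Fin 3} ∑_{(A,B) ∈ S, A x y = B y x} w(A,B) is at most 8. That is, every local classical strategy satisfies the Bell-type inequality ∑_{x,y} Pr[a_y^{(x)} = b_x^{(y)} | x, y, R_{L,A}, R_{L,B}] ≤ 8. -/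
set_option maxRecDepth 10000

/-- The set of pairs of deterministic Alice and Bob strategies for the Magic
Square game: `A` with all rows summing to `0` and `B` with all columns summing
to `1` (mod 2). -/
def MagicSquareStrategies : Type :=
  {s : (Fin 3 → Fin 3 → ZMod 2) × (Fin 3 → Fin 3 → ZMod 2) //
    (∀ x : Fin 3, s.1 x 0 + s.1 x 1 + s.1 x 2 = 0) ∧
    (∀ y : Fin 3, s.2 y 0 + s.2 y 1 + s.2 y 2 = 1)}

noncomputable instance : Fintype MagicSquareStrategies := by
  unfold MagicSquareStrategies
  classical
  infer_instance

lemma magic_square_not_all_agree (s : MagicSquareStrategies) :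
    ∃ x y : Fin 3, s.val.1 x y ≠ s.val.2 y x := by
  obtain ⟨⟨A, B⟩, hA, hB⟩ := s
  by_contra h
  push_neg at h
  simp only [ne_eq, not_not] at h
  have h0 : ∑ x : Fin 3, (A x 0 + A x 1 + A x 2) = 0 := by simp [hA]
  have h1 : ∑ y : Fin 3, (B y 0 + B y 1 + B y 2) = 1 := by
    simp only [hB, Fin.sum_univ_three]
    decide
  simp only [Fin.sum_univ_three] at h0 h1
  rw [h 0 0, h 0 1, h 0 2, h 1 0, h 1 1, h 1 2, h 2 0, h 2 1, h 2 2] at h0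
  have : (0 : ZMod 2) = 1 := by rw [← h0, ← h1]; ring
  exact absurd this (by decide)

lemma magic_square_card_le (s : MagicSquareStrategies) :
    ((Finset.univ : Finset (Fin 3 × Fin 3)).filter
      (fun p => s.val.1 p.1 p.2 = s.val.2 p.2 p.1)).card ≤ 8 := by
  obtain ⟨x0, y0, hxy⟩ := magic_square_not_all_agree s
  have hsub : ((Finset.univ : Finset (Fin 3 × Fin 3)).filter
      (fun p => s.val.1 p.1 p.2 = s.val.2 p.2 p.1)) ⊆
      (Finset.univ : Finset (Fin 3 × Fin 3)).erase (x0, y0) := by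
    intro p hp
    simp only [Finset.mem_filter, Finset.mem_univ, true_and] at hp
    simp only [Finset.mem_erase, Finset.mem_univ, and_true]
    rintro rfl
    exact hxy hp
  calc _ ≤ ((Finset.univ : Finset (Fin 3 × Fin 3)).erase (x0, y0)).card :=
        Finset.card_le_card hsub
    _ = 8 := by
        rw [Finset.card_erase_of_mem (Finset.mem_univ _)]
        simp

/-- **The Magic Square Bell-type inequality for local randomized strategies.**
Any convex mixture (nonnegative weights summing to `1`) of deterministic
strategy pairs satisfies
`∑_{x,y} Pr[a_y^{(x)} = b_x^{(y)} | x, y, R_{L,A}, R_{L,B}] ≤ 8`. -/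
theorem magic_square_bell_inequality
    (w : MagicSquareStrategies → ℝ)
    (hw0 : ∀ s, 0 ≤ w s)
    (hw1 : ∑ s : MagicSquareStrategies, w s = 1) :
    ∑ x : Fin 3, ∑ y : Fin 3,
      ∑ s ∈ Finset.univ.filter
          (fun s : MagicSquareStrategies => s.val.1 x y = s.val.2 y x), w s ≤ 8 := by
  classical
  have step1 : ∑ x : Fin 3, ∑ y : Fin 3,
      ∑ s ∈ Finset.univ.filter
          (fun s : MagicSquareStrategies => s.val.1 x y = s.val.2 y x), w s
      = ∑ s : MagicSquareStrategies,
        (((Finset.univ : Finset (Fin 3 × Fin 3)).filter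
          (fun p => s.val.1 p.1 p.2 = s.val.2 p.2 p.1)).card : ℝ) * w s := by
    simp_rw [Finset.sum_filter]
    rw [← Finset.sum_product']
    rw [Finset.sum_comm]
    refine Finset.sum_congr rfl fun s _ => ?_
    rw [← Finset.sum_filter, Finset.sum_const, nsmul_eq_mul]
    rw [Finset.univ_product_univ]
  rw [step1]
  calc ∑ s : MagicSquareStrategies,
      (((Finset.univ : Finset (Fin 3 × Fin 3)).filter
        (fun p => s.val.1 p.1 p.2 = s.val.2 p.2 p.1)).card : ℝ) * w s
      ≤ ∑ s : MagicSquareStrategies, 8 * w s := by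
        refine Finset.sum_le_sum fun s _ => ?_
        exact mul_le_mul_of_nonneg_right
          (by exact_mod_cast magic_square_card_le s) (hw0 s)
    _ = 8 := by rw [← Finset.mul_sum, hw1, mul_one]
end

section
/- Let X, Y, 𝒜, ℬ be finite nonempty sets with |X| = m_A, |Y| = m_B, |𝒜| = n_A, |ℬ| = n_B. For functions f : X → 𝒜 and g : Y → ℬ, let v(f,g) ∈ ℝ^{X × Y × 𝒜 × ℬ} be the vector with entries v(f,g)(x, y, a, b) = 1 if f x = a and g y = b, and 0 otherwise. Then the affine span of the set {v(f,g) : f : X → 𝒜, g : Y → ℬ} of all local deterministic probability distributions has dimension m_A·m_B·(n_A − 1)·(n_B − 1) + m_A·(n_A − 1) + m_B·(n_B − 1). -/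
set_option linter.unusedSectionVars false
set_option linter.unreachableTactic false
set_option linter.unusedTactic false
open Finset

section Aux
variable {X 𝒜 : Type*} [Fintype X] [Fintype 𝒜]
variable [DecidableEq X] [DecidableEq 𝒜]

/-- column vectors -/
def colA (a₀ : 𝒜) : Option (X × {a : 𝒜 // a ≠ a₀}) → X × 𝒜 → ℝ
  | none => fun p => if p.2 = a₀ then 1 else 0
  | some i => fun p => (if p = (i.1, i.2.1) then 1 else 0) - (if p = (i.1, a₀) then 1 else 0)

/-- dual vectors -/
def duA (a₀ : 𝒜) (x₀ : X) : Option (X × {a : 𝒜 // a ≠ a₀}) → X × 𝒜 → ℝ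
  | none => fun p => if p.1 = x₀ then 1 else 0
  | some i => fun p => if p = (i.1, i.2.1) then 1 else 0

def coefA (a₀ : 𝒜) (f : X → 𝒜) : Option (X × {a : 𝒜 // a ≠ a₀}) → ℝ
  | none => 1
  | some i => if f i.1 = i.2.1 then 1 else 0

theorem duality (a₀ : 𝒜) (x₀ : X) (i i' : Option (X × {a : 𝒜 // a ≠ a₀})) :
    ∑ p : X × 𝒜, duA a₀ x₀ i p * colA a₀ i' p = if i = i' then 1 else 0 := by
  match i, i' with
  | none, none =>
      simp [duA, colA, Fintype.sum_prod_type, Finset.sum_ite_eq', mul_ite]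
  | none, some i' =>
      simp only [duA, colA, Fintype.sum_prod_type]
      rw [if_neg (by simp)]
      refine Finset.sum_eq_zero fun x _ => ?_
      simp only [mul_sub, mul_ite, mul_one, mul_zero, Finset.sum_sub_distrib]
      by_cases hx' : x = i'.1 <;>
        simp [hx', Prod.ext_iff, Finset.sum_ite_eq']
  | some i, none =>
      have : ∀ p : X × 𝒜, duA a₀ x₀ (some i) p * colA a₀ none p
          = if p = (i.1, i.2.1) then (if (i.2 : 𝒜) = a₀ then 1 else 0) else 0 := by
        intro p
        simp only [duA, colA]
        by_cases h : p = (i.1, i.2.1) <;> simp [h]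
      rw [Finset.sum_congr rfl fun p _ => this p]
      simp [Finset.sum_ite_eq', i.2.2]
  | some i, some i' =>
      have : ∀ p : X × 𝒜, duA a₀ x₀ (some i) p * colA a₀ (some i') p
          = (if p = (i.1, i.2.1) then ((if p = (i'.1, i'.2.1) then 1 else 0)
              - (if p = (i'.1, a₀) then 1 else 0)) else 0) := by
        intro p; simp only [duA, colA]; by_cases h : p = (i.1, i.2.1) <;> simp [h]
      rw [Finset.sum_congr rfl fun p _ => this p]
      rw [Finset.sum_ite_eq' Finset.univ ((i.1, i.2.1) : X × 𝒜)]
      simp only [Finset.mem_univ, if_true]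
      have h2 : ((i.1, (i.2 : 𝒜)) = (i'.1, a₀)) = False := by
        simp [Prod.ext_iff]; intro _; exact i.2.2
      by_cases h : i = i'
      · subst h; simp [h2]
      · have : ((i.1, (i.2 : 𝒜)) = (i'.1, (i'.2 : 𝒜))) = False := by
          simp [Prod.ext_iff]; intro h1 h3; exact h (by ext <;> simp [h1, h3, Prod.ext_iff])
        simp [this, h2, h]

theorem sum_ind (a₀ c : 𝒜) : ∑ a' : {a : 𝒜 // a ≠ a₀}, (if c = (a' : 𝒜) then (1:ℝ) else 0)
    = if c = a₀ then 0 else 1 := by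
  by_cases h : c = a₀
  · subst h
    rw [Finset.sum_eq_zero, if_pos rfl]
    intro a' _; simp [Ne.symm a'.2]
  · rw [if_neg h, Finset.sum_eq_single ⟨c, h⟩]
    · simp
    · intro b _ hb; simp only [ite_eq_right_iff]; intro hc
      exact absurd (by simp [Subtype.ext_iff, ← hc]) hb
    · simp

theorem expandA (a₀ : 𝒜) (f : X → 𝒜) (p : X × 𝒜) :
    ∑ i : Option (X × {a : 𝒜 // a ≠ a₀}), coefA a₀ f i * colA a₀ i p
      = if f p.1 = p.2 then 1 else 0 := by
  obtain ⟨x, a⟩ := p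
  rw [Fintype.sum_option]
  simp only [coefA, colA, one_mul, Fintype.sum_prod_type]
  by_cases ha : a = a₀
  · subst ha
    have : ∀ x' : X, ∑ a' : {a' : 𝒜 // a' ≠ a},
        (if f x' = (a' : 𝒜) then (1:ℝ) else 0) *
          ((if (x, a) = (x', (a' : 𝒜)) then 1 else 0) - (if (x, a) = (x', a) then 1 else 0))
        = if x = x' then -(if f x = a then 0 else 1) else 0 := by
      intro x'
      by_cases hx : x = x'
      · subst hx
        rw [if_pos (rfl : (x, a) = (x, a)), if_pos (rfl : x = x), ← neg_eq_iff_eq_neg,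
          ← Finset.sum_neg_distrib, ← sum_ind a (f x)]
        refine Finset.sum_congr rfl fun a' _ => ?_
        have h1 : ((x, a) = (x, (a' : 𝒜))) = False := by simp [Ne.symm a'.2]
        simp [h1]
      · rw [if_neg hx]
        refine Finset.sum_eq_zero fun a' _ => ?_
        have h1 : ((x, a) = (x', (a' : 𝒜))) = False := by simp [Prod.ext_iff, hx]
        have h2 : ((x, a) = (x', a)) = False := by simp [Prod.ext_iff, hx]
        simp [h1, h2]
    rw [Finset.sum_congr rfl fun x' _ => this x']
    rw [Finset.sum_ite_eq Finset.univ x]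
    by_cases hf : f x = a <;> simp [hf]
  · have : ∀ x' : X, ∑ a' : {a : 𝒜 // a ≠ a₀},
        (if f x' = (a' : 𝒜) then (1:ℝ) else 0) *
          ((if (x, a) = (x', (a' : 𝒜)) then 1 else 0) - (if (x, a) = (x', a₀) then 1 else 0))
        = if x = x' then (if f x = a then 1 else 0) else 0 := by
      intro x'
      by_cases hx : x = x'
      · subst hx
        rw [if_pos rfl, Finset.sum_eq_single ⟨a, ha⟩]
        · have h2 : ((x, a) = (x, a₀)) = False := by simp [ha]
          simp [h2, eq_comm]
        · intro b _ hb
          have h1 : ((x, a) = (x, (b : 𝒜))) = False := by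
            simp [Subtype.ext_iff] at hb ⊢; exact fun h => hb h.symm
          have h2 : ((x, a) = (x, a₀)) = False := by simp [ha]
          simp [h1, h2]
        · simp
      · rw [if_neg hx]
        refine Finset.sum_eq_zero fun a' _ => ?_
        have h1 : ((x, a) = (x', (a' : 𝒜))) = False := by simp [Prod.ext_iff, hx]
        have h2 : ((x, a) = (x', a₀)) = False := by simp [Prod.ext_iff, hx]
        simp [h1, h2]
    rw [Finset.sum_congr rfl fun x' _ => this x']
    rw [Finset.sum_ite_eq Finset.univ x]
    simp [ha]

end Aux
section Aux2
variable {X Y 𝒜 ℬ : Type*} [Fintype X] [Fintype Y] [Fintype 𝒜] [Fintype ℬ]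
variable [DecidableEq X] [DecidableEq Y] [DecidableEq 𝒜] [DecidableEq ℬ]

abbrev IdxA (X 𝒜 : Type*) (a₀ : 𝒜) := Option (X × {a : 𝒜 // a ≠ a₀})

def bb (a₀ : 𝒜) (b₀ : ℬ) (k : IdxA X 𝒜 a₀ × IdxA Y ℬ b₀) : X × Y × 𝒜 × ℬ → ℝ :=
  fun q => colA a₀ k.1 (q.1, q.2.2.1) * colA b₀ k.2 (q.2.1, q.2.2.2)

theorem sum_split (F : X × 𝒜 → ℝ) (G : Y × ℬ → ℝ) :
    ∑ q : X × Y × 𝒜 × ℬ, F (q.1, q.2.2.1) * G (q.2.1, q.2.2.2)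
      = (∑ p, F p) * (∑ r, G r) := by
  rw [Finset.sum_mul_sum]
  simp only [Fintype.sum_prod_type]
  refine Finset.sum_congr rfl fun x _ => ?_
  rw [Finset.sum_comm]

theorem sum_prod_mul {ι κ : Type*} [Fintype ι] [Fintype κ] (f : ι → ℝ) (g : κ → ℝ) :
    ∑ k : ι × κ, f k.1 * g k.2 = (∑ i, f i) * (∑ j, g j) := by
  rw [Finset.sum_mul_sum, Fintype.sum_prod_type]

theorem ldv_expand (a₀ : 𝒜) (b₀ : ℬ) (f : X → 𝒜) (g : Y → ℬ) :
    (fun q : X × Y × 𝒜 × ℬ => if f q.1 = q.2.2.1 ∧ g q.2.1 = q.2.2.2 then (1:ℝ) else 0)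
      = ∑ k : IdxA X 𝒜 a₀ × IdxA Y ℬ b₀, (coefA a₀ f k.1 * coefA b₀ g k.2) • bb a₀ b₀ k := by
  funext q
  rw [Finset.sum_apply]
  have h : ∀ k : IdxA X 𝒜 a₀ × IdxA Y ℬ b₀,
      ((coefA a₀ f k.1 * coefA b₀ g k.2) • bb a₀ b₀ k) q
      = (coefA a₀ f k.1 * colA a₀ k.1 (q.1, q.2.2.1))
          * (coefA b₀ g k.2 * colA b₀ k.2 (q.2.1, q.2.2.2)) := by
    intro k; simp only [Pi.smul_apply, bb, smul_eq_mul]; ring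
  rw [Finset.sum_congr rfl fun k _ => h k,
    sum_prod_mul (fun i => coefA a₀ f i * colA a₀ i (q.1, q.2.2.1))
      (fun j => coefA b₀ g j * colA b₀ j (q.2.1, q.2.2.2)), expandA, expandA]
  by_cases h1 : f q.1 = q.2.2.1 <;> by_cases h2 : g q.2.1 = q.2.2.2 <;> simp [h1, h2]

theorem bb_dual (a₀ : 𝒜) (x₀ : X) (b₀ : ℬ) (y₀ : Y) (k k' : IdxA X 𝒜 a₀ × IdxA Y ℬ b₀) :
    ∑ q : X × Y × 𝒜 × ℬ,
        (duA a₀ x₀ k.1 (q.1, q.2.2.1) * duA b₀ y₀ k.2 (q.2.1, q.2.2.2)) * bb a₀ b₀ k' q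
      = if k = k' then 1 else 0 := by
  have h : ∀ q : X × Y × 𝒜 × ℬ,
      (duA a₀ x₀ k.1 (q.1, q.2.2.1) * duA b₀ y₀ k.2 (q.2.1, q.2.2.2)) * bb a₀ b₀ k' q
      = (fun p => duA a₀ x₀ k.1 p * colA a₀ k'.1 p) (q.1, q.2.2.1)
          * (fun p => duA b₀ y₀ k.2 p * colA b₀ k'.2 p) (q.2.1, q.2.2.2) := by
    intro q; simp only [bb]; ring
  rw [Finset.sum_congr rfl fun q _ => h q,
    sum_split (fun p => duA a₀ x₀ k.1 p * colA a₀ k'.1 p)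
      (fun p => duA b₀ y₀ k.2 p * colA b₀ k'.2 p), duality, duality]
  by_cases h1 : k.1 = k'.1 <;> by_cases h2 : k.2 = k'.2 <;>
    simp [h1, h2, Prod.ext_iff]

theorem bb_indep (a₀ : 𝒜) (x₀ : X) (b₀ : ℬ) (y₀ : Y) :
    LinearIndependent ℝ (bb (X := X) (Y := Y) a₀ b₀) := by
  classical
  set T : ((X × Y × 𝒜 × ℬ) → ℝ) →ₗ[ℝ] ((IdxA X 𝒜 a₀ × IdxA Y ℬ b₀) → ℝ) :=
    LinearMap.pi fun k => ∑ q : X × Y × 𝒜 × ℬ,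
      (duA a₀ x₀ k.1 (q.1, q.2.2.1) * duA b₀ y₀ k.2 (q.2.1, q.2.2.2)) •
        (LinearMap.proj q : ((X × Y × 𝒜 × ℬ) → ℝ) →ₗ[ℝ] ℝ) with hT
  apply LinearIndependent.of_comp T
  have hTb : T ∘ bb a₀ b₀ = fun k' => Pi.single k' (1:ℝ) := by
    funext k' k
    simp only [hT, Function.comp_apply, LinearMap.pi_apply, LinearMap.coe_sum,
      Finset.sum_apply, LinearMap.smul_apply, LinearMap.proj_apply, smul_eq_mul]
    rw [bb_dual a₀ x₀ b₀ y₀ k k', Pi.single_apply]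
  rw [hTb]
  have h := (Pi.basisFun ℝ (IdxA X 𝒜 a₀ × IdxA Y ℬ b₀)).linearIndependent
  rwa [show ⇑(Pi.basisFun ℝ (IdxA X 𝒜 a₀ × IdxA Y ℬ b₀)) = fun k' => Pi.single k' (1:ℝ)
    from funext fun k' => Pi.basisFun_apply ℝ _ k'] at h

theorem colA_some (a₀ : 𝒜) (i : X × {a : 𝒜 // a ≠ a₀}) (p : X × 𝒜) :
    colA a₀ (some i) p
      = (if Function.update (fun _ => a₀) i.1 i.2.1 p.1 = p.2 then 1 else 0)
        - (if a₀ = p.2 then 1 else 0) := by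
  obtain ⟨x, a⟩ := i; obtain ⟨px, pa⟩ := p
  simp only [colA, Function.update_apply]
  by_cases h : px = x
  · simp [h, Prod.ext_iff, eq_comm]
  · have h' : ¬(x = px) := fun hh => h hh.symm
    simp [h, h', Prod.ext_iff]

theorem bb_some_none (a₀ : 𝒜) (b₀ : ℬ) (i : X × {a : 𝒜 // a ≠ a₀}) :
    bb (Y := Y) (ℬ := ℬ) a₀ b₀ (some i, none)
      = (fun q : X × Y × 𝒜 × ℬ =>
          if Function.update (fun _ => a₀) i.1 i.2.1 q.1 = q.2.2.1
              ∧ (fun _ : Y => b₀) q.2.1 = q.2.2.2 then (1:ℝ) else 0)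
        - (fun q : X × Y × 𝒜 × ℬ =>
          if (fun _ : X => a₀) q.1 = q.2.2.1 ∧ (fun _ : Y => b₀) q.2.1 = q.2.2.2
            then (1:ℝ) else 0) := by
  funext q
  obtain ⟨x, y, a, b⟩ := q
  show colA a₀ (some i) (x, a) * colA b₀ none (y, b) = _
  rw [colA_some]
  have hb : colA b₀ (none : IdxA Y ℬ b₀) (y, b) = if b = b₀ then 1 else 0 := rfl
  rw [hb]
  simp only [Pi.sub_apply]
  set u := Function.update (fun _ : X => a₀) i.1 i.2.1 x with hu
  by_cases h1 : u = a <;> by_cases h2 : a₀ = a <;> by_cases h3 : b₀ = b <;>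
    simp [h1, h2, h3, eq_comm]

theorem bb_none_some (a₀ : 𝒜) (b₀ : ℬ) (j : Y × {b : ℬ // b ≠ b₀}) :
    bb (X := X) (𝒜 := 𝒜) a₀ b₀ (none, some j)
      = (fun q : X × Y × 𝒜 × ℬ =>
          if (fun _ : X => a₀) q.1 = q.2.2.1
              ∧ Function.update (fun _ => b₀) j.1 j.2.1 q.2.1 = q.2.2.2 then (1:ℝ) else 0)
        - (fun q : X × Y × 𝒜 × ℬ =>
          if (fun _ : X => a₀) q.1 = q.2.2.1 ∧ (fun _ : Y => b₀) q.2.1 = q.2.2.2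
            then (1:ℝ) else 0) := by
  funext q
  obtain ⟨x, y, a, b⟩ := q
  show colA a₀ none (x, a) * colA b₀ (some j) (y, b) = _
  rw [colA_some]
  have ha : colA a₀ (none : IdxA X 𝒜 a₀) (x, a) = if a = a₀ then 1 else 0 := rfl
  rw [ha]
  simp only [Pi.sub_apply]
  set w := Function.update (fun _ : Y => b₀) j.1 j.2.1 y with hw
  by_cases h1 : w = b <;> by_cases h2 : b₀ = b <;> by_cases h3 : a₀ = a <;>
    simp [h1, h2, h3, eq_comm]

theorem bb_some_some (a₀ : 𝒜) (b₀ : ℬ) (i : X × {a : 𝒜 // a ≠ a₀}) (j : Y × {b : ℬ // b ≠ b₀}) :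
    bb a₀ b₀ (some i, some j)
      = ((fun q : X × Y × 𝒜 × ℬ =>
          if Function.update (fun _ => a₀) i.1 i.2.1 q.1 = q.2.2.1
              ∧ Function.update (fun _ => b₀) j.1 j.2.1 q.2.1 = q.2.2.2 then (1:ℝ) else 0)
        - (fun q : X × Y × 𝒜 × ℬ =>
          if (fun _ : X => a₀) q.1 = q.2.2.1
              ∧ Function.update (fun _ => b₀) j.1 j.2.1 q.2.1 = q.2.2.2 then (1:ℝ) else 0))
        - ((fun q : X × Y × 𝒜 × ℬ =>
          if Function.update (fun _ => a₀) i.1 i.2.1 q.1 = q.2.2.1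
              ∧ (fun _ : Y => b₀) q.2.1 = q.2.2.2 then (1:ℝ) else 0)
        - (fun q : X × Y × 𝒜 × ℬ =>
          if (fun _ : X => a₀) q.1 = q.2.2.1 ∧ (fun _ : Y => b₀) q.2.1 = q.2.2.2
            then (1:ℝ) else 0)) := by
  funext q
  obtain ⟨x, y, a, b⟩ := q
  show colA a₀ (some i) (x, a) * colA b₀ (some j) (y, b) = _
  rw [colA_some, colA_some]
  simp only [Pi.sub_apply]
  set u := Function.update (fun _ : X => a₀) i.1 i.2.1 x with hu
  set w := Function.update (fun _ : Y => b₀) j.1 j.2.1 y with hw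
  by_cases h1 : u = a <;> by_cases h2 : a₀ = a <;>
    by_cases h3 : w = b <;> by_cases h4 : b₀ = b <;>
      simp [h1, h2, h3, h4]

end Aux2

/-- **Dimension of the local polytope (no-signalling dimension).**
For a bipartite scenario with finite nonempty input sets `X, Y` and output sets
`𝒜, ℬ`, the affine span of all local deterministic probability vectors
`v(f,g)(x, y, a, b) = [f x = a] · [g y = b]` has dimension
`m_A m_B (n_A − 1)(n_B − 1) + m_A (n_A − 1) + m_B (n_B − 1)`. -/
theorem dimension_of_local_polytope
    {X Y 𝒜 ℬ : Type*} [Fintype X] [Fintype Y] [Fintype 𝒜] [Fintype ℬ]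
    [Nonempty X] [Nonempty Y] [Nonempty 𝒜] [Nonempty ℬ]
    [DecidableEq 𝒜] [DecidableEq ℬ] :
    Module.finrank ℝ
      (affineSpan ℝ
        {v : X × Y × 𝒜 × ℬ → ℝ |
          ∃ (f : X → 𝒜) (g : Y → ℬ),
            v = fun q => if f q.1 = q.2.2.1 ∧ g q.2.1 = q.2.2.2 then 1 else 0}).direction
      = Fintype.card X * Fintype.card Y * (Fintype.card 𝒜 - 1) * (Fintype.card ℬ - 1)
        + Fintype.card X * (Fintype.card 𝒜 - 1)
        + Fintype.card Y * (Fintype.card ℬ - 1) := by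
  classical
  obtain ⟨x₀⟩ := ‹Nonempty X›
  obtain ⟨y₀⟩ := ‹Nonempty Y›
  obtain ⟨a₀⟩ := ‹Nonempty 𝒜›
  obtain ⟨b₀⟩ := ‹Nonempty ℬ›
  set S : Set (X × Y × 𝒜 × ℬ → ℝ) :=
    {v | ∃ (f : X → 𝒜) (g : Y → ℬ),
        v = fun q => if f q.1 = q.2.2.1 ∧ g q.2.1 = q.2.2.2 then 1 else 0} with hS
  rw [direction_affineSpan]
  have hmem : ∀ (f : X → 𝒜) (g : Y → ℬ),
      (fun q : X × Y × 𝒜 × ℬ =>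
        if f q.1 = q.2.2.1 ∧ g q.2.1 = q.2.2.2 then (1:ℝ) else 0) ∈ S :=
    fun f g => ⟨f, g, rfl⟩
  let I' := {k : IdxA X 𝒜 a₀ × IdxA Y ℬ b₀ // k ≠ (none, none)}
  let b' : I' → (X × Y × 𝒜 × ℬ → ℝ) := fun k => bb a₀ b₀ k.1
  have key : vectorSpan ℝ S = Submodule.span ℝ (Set.range b') := by
    apply le_antisymm
    · rw [vectorSpan, Submodule.span_le]
      rintro w hw
      rw [Set.mem_vsub] at hw
      obtain ⟨v1, hv1, v2, hv2, rfl⟩ := hw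
      obtain ⟨f1, g1, rfl⟩ := hv1
      obtain ⟨f2, g2, rfl⟩ := hv2
      rw [vsub_eq_sub, ldv_expand a₀ b₀ f1 g1, ldv_expand a₀ b₀ f2 g2,
        ← Finset.sum_sub_distrib]
      refine Submodule.sum_mem _ fun k _ => ?_
      rw [← sub_smul]
      by_cases hk : k = (none, none)
      · subst hk
        have h0 : coefA a₀ f1 none * coefA b₀ g1 none
            - coefA a₀ f2 none * coefA b₀ g2 none = 0 := by simp [coefA]
        rw [h0, zero_smul]
        exact Submodule.zero_mem _
      · exact Submodule.smul_mem _ _ (Submodule.subset_span ⟨⟨k, hk⟩, rfl⟩)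
    · rw [Submodule.span_le]
      rintro w ⟨⟨⟨i, j⟩, hk⟩, rfl⟩
      show bb a₀ b₀ (i, j) ∈ vectorSpan ℝ S
      match i, j with
      | none, none => exact absurd rfl hk
      | some i, none =>
          rw [bb_some_none a₀ b₀ i]
          exact vsub_mem_vectorSpan ℝ
            (hmem (Function.update (fun _ => a₀) i.1 i.2.1) (fun _ => b₀))
            (hmem (fun _ => a₀) (fun _ => b₀))
      | none, some j =>
          rw [bb_none_some a₀ b₀ j]
          exact vsub_mem_vectorSpan ℝ
            (hmem (fun _ => a₀) (Function.update (fun _ => b₀) j.1 j.2.1))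
            (hmem (fun _ => a₀) (fun _ => b₀))
      | some i, some j =>
          rw [bb_some_some a₀ b₀ i j]
          exact Submodule.sub_mem _
            (vsub_mem_vectorSpan ℝ
              (hmem (Function.update (fun _ => a₀) i.1 i.2.1)
                (Function.update (fun _ => b₀) j.1 j.2.1))
              (hmem (fun _ => a₀) (Function.update (fun _ => b₀) j.1 j.2.1)))
            (vsub_mem_vectorSpan ℝ
              (hmem (Function.update (fun _ => a₀) i.1 i.2.1) (fun _ => b₀))
              (hmem (fun _ => a₀) (fun _ => b₀)))
  rw [key]
  have hindep : LinearIndependent ℝ b' :=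
    (bb_indep a₀ x₀ b₀ y₀).comp Subtype.val Subtype.val_injective
  rw [finrank_span_eq_card hindep]
  -- cardinality computation
  have cA : Fintype.card {a : 𝒜 // a ≠ a₀} = Fintype.card 𝒜 - 1 := by
    rw [Fintype.card_subtype_compl, Fintype.card_subtype_eq]
  have cB : Fintype.card {b : ℬ // b ≠ b₀} = Fintype.card ℬ - 1 := by
    rw [Fintype.card_subtype_compl, Fintype.card_subtype_eq]
  have cI : Fintype.card (IdxA X 𝒜 a₀ × IdxA Y ℬ b₀)
      = (Fintype.card X * (Fintype.card 𝒜 - 1) + 1)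
        * (Fintype.card Y * (Fintype.card ℬ - 1) + 1) := by
    simp [Fintype.card_prod, Fintype.card_option, cA, cB]
  have cI' : Fintype.card I' = Fintype.card (IdxA X 𝒜 a₀ × IdxA Y ℬ b₀) - 1 := by
    rw [Fintype.card_subtype_compl, Fintype.card_subtype_eq]
  rw [cI', cI]
  set p := Fintype.card X * (Fintype.card 𝒜 - 1) with hp
  set q := Fintype.card Y * (Fintype.card ℬ - 1) with hq
  have h1 : (p + 1) * (q + 1) = p * q + p + q + 1 := by ring
  have h2 : Fintype.card X * Fintype.card Y * (Fintype.card 𝒜 - 1) * (Fintype.card ℬ - 1)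
      = p * q := by rw [hp, hq]; ring
  rw [h1, h2]
  omega
end
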